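/- Let n, d, k be positive integers with k ≥ 2. Then there exists a reduced decision rule system S such that n(S) = n + d, k(S) = k, d(S) = d, |S| = 2n + k − 1, and T_AD(S) ≥ 2^n. -/

import Mathlib

/- Common formal framework for decision rule systems and decision trees /
   acyclic decision graphs, following Durdymyradov & Moshkov. -/

attribute [local instance] Classical.propDecidable

noncomputable section

namespace DRS

/-- A decision rule `(a_{i₁}=δ₁) ∧ ⋯ ∧ (a_{i_m}=δ_m) → σ`:
`K` is the finite set of equations (attribute index, value), `rhs` is σ. -/
structure Rule where
  K : Finset (ℕ × ℕ)
  rhs : ℕ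

/-- Well-formedness of a rule: the attributes on its left-hand side are pairwise different. -/
def Rule.WF (r : Rule) : Prop := ∀ p ∈ r.K, ∀ q ∈ r.K, p.1 = q.1 → p = q

/-- A(r): the set of attributes of a rule. -/
def Rule.attrs (r : Rule) : Finset ℕ := r.K.image Prod.fst

/-- The length m of a rule. -/
def Rule.len (r : Rule) : ℕ := r.K.card

/-- A(S) -/
def attrs (S : Finset Rule) : Finset ℕ := S.biUnion Rule.attrs

/-- n(S) -/
def nPar (S : Finset Rule) : ℕ := (attrs S).card

/-- d(S): the maximum length of a rule of S. -/
def dPar (S : Finset Rule) : ℕ := S.sup Rule.len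

/-- D(S): the set of right-hand sides. -/
def rhsSet (S : Finset Rule) : Finset ℕ := S.image Rule.rhs

/-- V_S(a_i) -/
def VS (S : Finset Rule) (i : ℕ) : Finset ℕ :=
  ((S.biUnion Rule.K).filter fun p => p.1 = i).image Prod.snd

/-- k(S) -/
def kPar (S : Finset Rule) : ℕ := (attrs S).sup fun i => (VS S i).card

/-- Attribute values in trees are `Option ℕ`; `none` plays the role of the special value `*`.
`allowed S false i` is (the lift of) `V_S(a_i)`, and `allowed S true i` is `EV_S(a_i)`. -/
def allowed (S : Finset Rule) (ext : Bool) (i : ℕ) : Finset (Option ℕ) :=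
  (VS S i).image some ∪ (if ext then {none} else ∅)

/-- Consistency of an equation system over ω ∪ {*}. -/
def ConsistentE (E : Finset (ℕ × Option ℕ)) : Prop :=
  ∀ p ∈ E, ∀ q ∈ E, p.1 = q.1 → p.2 = q.2

/-- Lift the left-hand side of a rule to an equation system over ω ∪ {*}. -/
def liftK (K : Finset (ℕ × ℕ)) : Finset (ℕ × Option ℕ) :=
  K.image fun p => (p.1, some p.2)

/-- A finite directed labeled graph: the nodes are `0, …, n-1`, with a distinguished root,
each node carries either an attribute (working node) or a set of rules (terminal node),
and edges are labeled with elements of ω ∪ {*}. -/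
structure DGraph where
  n : ℕ
  root : ℕ
  label : ℕ → ℕ ⊕ Finset Rule
  edges : Finset (ℕ × Option ℕ × ℕ)

namespace DGraph

def step (G : DGraph) (u v : ℕ) : Prop := ∃ l, (u, l, v) ∈ G.edges

/-- The graph has no directed cycles. -/
def Acyclic (G : DGraph) : Prop := ∀ v, ¬ Relation.TransGen G.step v v

/-- A node is terminal if no edge leaves it. -/
def IsTerminal (G : DGraph) (v : ℕ) : Prop := ∀ e ∈ G.edges, e.1 ≠ v

/-- The set of rules attached to a (terminal) node. -/
def termSet (G : DGraph) (v : ℕ) : Finset Rule :=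
  Sum.elim (fun _ => (∅ : Finset Rule)) id (G.label v)

/-- `G` is an acyclic decision graph over the rule system `S`;
`ext = false` : branching over `V_S` (o-type), `ext = true` : branching over `EV_S` (e-type).
Terminal nodes are labeled with subsets of S; each working node is labeled with an
attribute `a` of `A(S)` and has exactly one leaving edge for every element of
`V_S(a)` (resp. `EV_S(a)`), the edges leaving it being labeled with these
pairwise different elements. -/
def IsDG (G : DGraph) (S : Finset Rule) (ext : Bool) : Prop :=
  G.root < G.n ∧
  (∀ e ∈ G.edges, e.1 < G.n ∧ e.2.2 < G.n) ∧
  G.Acyclic ∧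
  (∀ v < G.n,
    if G.IsTerminal v then
      ∃ Z : Finset Rule, G.label v = Sum.inr Z ∧ Z ⊆ S
    else
      ∃ a : ℕ, G.label v = Sum.inl a ∧ a ∈ attrs S ∧
        (∀ l : Option ℕ, (∃ w, (v, l, w) ∈ G.edges) ↔ l ∈ allowed S ext a) ∧
        (∀ l w w', (v, l, w) ∈ G.edges → (v, l, w') ∈ G.edges → w = w'))

/-- `G` is a finite directed tree with root: the root has no entering edge and every
other node has exactly one entering edge (together with acyclicity this makes the
graph a rooted tree). -/
def IsTree (G : DGraph) : Prop :=
  (∀ e ∈ G.edges, e.2.2 ≠ G.root) ∧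
  (∀ v < G.n, v ≠ G.root → ∃! e, e ∈ G.edges ∧ e.2.2 = v)

/-- `chainFrom G v p t`: the list `p` of (node, leaving-edge-label) pairs forms a
directed path in `G` starting at `v` and ending at `t`. -/
def chainFrom (G : DGraph) : ℕ → List (ℕ × Option ℕ) → ℕ → Prop
  | v, [], t => v = t
  | v, e :: rest, t => e.1 = v ∧ ∃ w, (v, e.2, w) ∈ G.edges ∧ chainFrom G w rest t

/-- A complete path: from the root to a terminal node; it is recorded by the list of
its working nodes with the labels of the edges taken, together with its terminal node. -/
def IsCompletePath (G : DGraph) (p : List (ℕ × Option ℕ)) (t : ℕ) : Prop :=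
  G.chainFrom G.root p t ∧ G.IsTerminal t ∧ t < G.n

/-- K(ξ): the equation system associated with a complete path. -/
def pathEqs (G : DGraph) (p : List (ℕ × Option ℕ)) : Finset (ℕ × Option ℕ) :=
  (p.filterMap fun e =>
    Sum.elim (fun a => some (a, e.2)) (fun _ => none) (G.label e.1)).toFinset

/-- L(Γ): the number of nodes. -/
def size (G : DGraph) : ℕ := G.n

/-- T(Γ): the number of terminal nodes labeled with pairwise different sets of rules. -/
def tCount (G : DGraph) : ℕ :=
  (((Finset.range G.n).filter fun v => G.IsTerminal v).image fun v => G.termSet v).card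

/-- h(Γ): the maximum number of working nodes on a complete path. -/
def depth (G : DGraph) : ℕ :=
  sSup {m | ∃ p t, G.IsCompletePath p t ∧ p.length = m}

/-- Path conditions for (the solutions of) the problems All Rules / EAll Rules. -/
def SolvesAR (G : DGraph) (S : Finset Rule) : Prop :=
  ∀ p t, G.IsCompletePath p t → ConsistentE (G.pathEqs p) →
    (∀ r ∈ G.termSet t, liftK r.K ⊆ G.pathEqs p) ∧
    (∀ r ∈ S, r ∉ G.termSet t → ¬ ConsistentE (liftK r.K ∪ G.pathEqs p))

/-- Path conditions for the problems All Decisions / EAll Decisions. -/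
def SolvesAD (G : DGraph) (S : Finset Rule) : Prop :=
  ∀ p t, G.IsCompletePath p t → ConsistentE (G.pathEqs p) →
    (∀ r ∈ G.termSet t, liftK r.K ⊆ G.pathEqs p) ∧
    (∀ r ∈ S, r ∉ G.termSet t → r.rhs ∉ (G.termSet t).image Rule.rhs →
      ¬ ConsistentE (liftK r.K ∪ G.pathEqs p))

/-- Path conditions for the problems Some Rules / ESome Rules. -/
def SolvesSR (G : DGraph) (S : Finset Rule) : Prop :=
  ∀ p t, G.IsCompletePath p t → ConsistentE (G.pathEqs p) →
    (∀ r ∈ G.termSet t, liftK r.K ⊆ G.pathEqs p) ∧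
    (G.termSet t = ∅ → ∀ r ∈ S, ¬ ConsistentE (liftK r.K ∪ G.pathEqs p))

end DGraph

/-- Γ is a decision tree over S solving AR(S) (an o-tree). -/
def TreeSolvesAR (S : Finset Rule) (G : DGraph) : Prop :=
  G.IsDG S false ∧ G.IsTree ∧ G.SolvesAR S
/-- Γ is a decision tree over S solving EAR(S) (an e-tree). -/
def TreeSolvesEAR (S : Finset Rule) (G : DGraph) : Prop :=
  G.IsDG S true ∧ G.IsTree ∧ G.SolvesAR S
/-- Γ is a decision tree over S solving AD(S) (an o-tree). -/
def TreeSolvesAD (S : Finset Rule) (G : DGraph) : Prop :=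
  G.IsDG S false ∧ G.IsTree ∧ G.SolvesAD S
/-- Γ is a decision tree over S solving EAD(S) (an e-tree). -/
def TreeSolvesEAD (S : Finset Rule) (G : DGraph) : Prop :=
  G.IsDG S true ∧ G.IsTree ∧ G.SolvesAD S
/-- Γ is a decision tree over S solving SR(S) (an o-tree). -/
def TreeSolvesSR (S : Finset Rule) (G : DGraph) : Prop :=
  G.IsDG S false ∧ G.IsTree ∧ G.SolvesSR S
/-- Γ is a decision tree over S solving ESR(S) (an e-tree). -/
def TreeSolvesESR (S : Finset Rule) (G : DGraph) : Prop :=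
  G.IsDG S true ∧ G.IsTree ∧ G.SolvesSR S

/-- L_AR(S): minimum number of nodes of a decision tree over S solving AR(S). -/
def L_AR (S : Finset Rule) : ℕ := sInf {m | ∃ G : DGraph, TreeSolvesAR S G ∧ G.size = m}
def L_EAR (S : Finset Rule) : ℕ := sInf {m | ∃ G : DGraph, TreeSolvesEAR S G ∧ G.size = m}
def L_AD (S : Finset Rule) : ℕ := sInf {m | ∃ G : DGraph, TreeSolvesAD S G ∧ G.size = m}
def L_EAD (S : Finset Rule) : ℕ := sInf {m | ∃ G : DGraph, TreeSolvesEAD S G ∧ G.size = m}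
def L_SR (S : Finset Rule) : ℕ := sInf {m | ∃ G : DGraph, TreeSolvesSR S G ∧ G.size = m}
def L_ESR (S : Finset Rule) : ℕ := sInf {m | ∃ G : DGraph, TreeSolvesESR S G ∧ G.size = m}

/-- T_AR(S): minimum number of differently-labeled terminal nodes of a decision tree
over S solving AR(S); similarly for the other problems. -/
def T_AR (S : Finset Rule) : ℕ := sInf {m | ∃ G : DGraph, TreeSolvesAR S G ∧ G.tCount = m}
def T_EAR (S : Finset Rule) : ℕ := sInf {m | ∃ G : DGraph, TreeSolvesEAR S G ∧ G.tCount = m}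
def T_AD (S : Finset Rule) : ℕ := sInf {m | ∃ G : DGraph, TreeSolvesAD S G ∧ G.tCount = m}
def T_EAD (S : Finset Rule) : ℕ := sInf {m | ∃ G : DGraph, TreeSolvesEAD S G ∧ G.tCount = m}
def T_SR (S : Finset Rule) : ℕ := sInf {m | ∃ G : DGraph, TreeSolvesSR S G ∧ G.tCount = m}
def T_ESR (S : Finset Rule) : ℕ := sInf {m | ∃ G : DGraph, TreeSolvesESR S G ∧ G.tCount = m}

/-- h_AR(S): minimum depth of a decision tree over S solving AR(S); similarly for the others. -/
def h_AR (S : Finset Rule) : ℕ := sInf {m | ∃ G : DGraph, TreeSolvesAR S G ∧ G.depth = m}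
def h_EAR (S : Finset Rule) : ℕ := sInf {m | ∃ G : DGraph, TreeSolvesEAR S G ∧ G.depth = m}
def h_AD (S : Finset Rule) : ℕ := sInf {m | ∃ G : DGraph, TreeSolvesAD S G ∧ G.depth = m}
def h_EAD (S : Finset Rule) : ℕ := sInf {m | ∃ G : DGraph, TreeSolvesEAD S G ∧ G.depth = m}
def h_SR (S : Finset Rule) : ℕ := sInf {m | ∃ G : DGraph, TreeSolvesSR S G ∧ G.depth = m}
def h_ESR (S : Finset Rule) : ℕ := sInf {m | ∃ G : DGraph, TreeSolvesESR S G ∧ G.depth = m}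

/-- L^DG_SR(S): minimum number of nodes of an acyclic decision graph solving SR(S). -/
def LDG_SR (S : Finset Rule) : ℕ :=
  sInf {m | ∃ G : DGraph, G.IsDG S false ∧ G.SolvesSR S ∧ G.size = m}
/-- L^DG_ESR(S): minimum number of nodes of an acyclic decision graph solving ESR(S). -/
def LDG_ESR (S : Finset Rule) : ℕ :=
  sInf {m | ∃ G : DGraph, G.IsDG S true ∧ G.SolvesSR S ∧ G.size = m}

/-- A node cover of the hypergraph G(S). -/
def IsNodeCover (S : Finset Rule) (B : Finset ℕ) : Prop :=
  B ⊆ attrs S ∧ ∀ r ∈ S, (Rule.attrs r).Nonempty → (Rule.attrs r ∩ B).Nonempty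

/-- β(S): the minimum cardinality of a node cover of the hypergraph G(S). -/
def beta (S : Finset Rule) : ℕ := sInf {c | ∃ B, IsNodeCover S B ∧ B.card = c}

/-- S⁺: the subsystem of S consisting of all rules of length d(S). -/
def Splus (S : Finset Rule) : Finset Rule := S.filter fun r => r.len = dPar S

/-- β⁺(S) = β(S⁺). -/
def betaPlus (S : Finset Rule) : ℕ := beta (Splus S)

/-- The rule r_α : delete from the left-hand side of r all equations belonging to α. -/
def Rule.restrict (r : Rule) (α : Finset (ℕ × Option ℕ)) : Rule :=
  ⟨r.K.filter fun p => (p.1, some p.2) ∉ α, r.rhs⟩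

/-- S_α : the system of the rules r_α for all r ∈ S with K(r) ∪ α consistent. -/
def restrict (S : Finset Rule) (α : Finset (ℕ × Option ℕ)) : Finset Rule :=
  (S.filter fun r => ConsistentE (liftK r.K ∪ α)).image fun r => r.restrict α

/-- E_C(S): consistent equation systems whose attributes are in A(S) and whose
values belong to V_S (ext = false) resp. EV_S (ext = true). -/
def ESys (S : Finset Rule) (ext : Bool) : Set (Finset (ℕ × Option ℕ)) :=
  {α | ConsistentE α ∧ ∀ p ∈ α, p.1 ∈ attrs S ∧ p.2 ∈ allowed S ext p.1}

/-- I_SR(S). -/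
def I_SR (S : Finset Rule) : Finset Rule :=
  if ∃ r ∈ S, r.len = 0 then S.filter fun r => r.len = 0 else S

/-- D₀(S): the right-hand sides of the rules of S of length 0. -/
def D0 (S : Finset Rule) : Finset ℕ := (S.filter fun r => r.len = 0).image Rule.rhs

/-- I_AD(S). -/
def I_AD (S : Finset Rule) : Finset Rule :=
  S.filter fun r => r.len = 0 ∨ r.rhs ∉ D0 S

def betaC (S : Finset Rule) (ext : Bool) : ℕ :=
  sSup {b | ∃ α ∈ ESys S ext, beta (restrict S α) = b}
def betaCplus (S : Finset Rule) (ext : Bool) : ℕ :=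
  sSup {b | ∃ α ∈ ESys S ext, betaPlus (restrict S α) = b}
def betaI (S : Finset Rule) (I : Finset Rule → Finset Rule) : ℕ :=
  sSup {b | ∃ α ∈ ESys S true, beta (I (restrict S α)) = b}
def betaIplus (S : Finset Rule) (I : Finset Rule → Finset Rule) : ℕ :=
  sSup {b | ∃ α ∈ ESys S true, betaPlus (I (restrict S α)) = b}

def beta_AR (S : Finset Rule) : ℕ := betaC S false
def beta_AD (S : Finset Rule) : ℕ := betaC S false
def beta_SR (S : Finset Rule) : ℕ := betaC S false
def beta_EAR (S : Finset Rule) : ℕ := betaC S true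
def beta_ARplus (S : Finset Rule) : ℕ := betaCplus S false
def beta_ADplus (S : Finset Rule) : ℕ := betaCplus S false
def beta_SRplus (S : Finset Rule) : ℕ := betaCplus S false
def beta_EARplus (S : Finset Rule) : ℕ := betaCplus S true
def beta_EAD (S : Finset Rule) : ℕ := betaI S I_AD
def beta_EADplus (S : Finset Rule) : ℕ := betaIplus S I_AD
def beta_ESR (S : Finset Rule) : ℕ := betaI S I_SR
def beta_ESRplus (S : Finset Rule) : ℕ := betaIplus S I_SR

/-- R_SR(S). -/
def R_SR (S : Finset Rule) : Finset Rule :=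
  S.filter fun r => ¬ ∃ r' ∈ S, r'.K ⊂ r.K

/-- R_AD(S). -/
def R_AD (S : Finset Rule) : Finset Rule :=
  S.filter fun r => ¬ ∃ r' ∈ S, r'.K ⊂ r.K ∧ r'.rhs = r.rhs

/-- A reduced decision rule system. -/
def Reduced (S : Finset Rule) : Prop :=
  attrs S ⊆ Finset.range (nPar S + 1) ∧
  rhsSet S ⊆ Finset.range ((rhsSet S).card + 1) ∧
  (∀ i ∈ attrs S, VS S i ⊆ Finset.range (kPar S + 1)) ∧
  1 ≤ dPar S

/-- Length of the binary representation of a natural number. -/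
def bitLen (m : ℕ) : ℕ := max 1 (Nat.size m)

/-- The length of the word "(a⟨i⟩=⟨δ⟩)" encoding one equation. -/
def eqLen (p : ℕ × ℕ) : ℕ := 4 + bitLen p.1 + bitLen p.2

/-- The length of the word encoding one rule (with the "∧" signs and "→"). -/
def Rule.wordLen (r : Rule) : ℕ :=
  (∑ p ∈ r.K, eqLen p) + (r.K.card - 1) + 1 + bitLen r.rhs

/-- size(S): the length of the word representing S (with ";" separating the rules). -/
def sizeS (S : Finset Rule) : ℕ := (∑ r ∈ S, r.wordLen) + (S.card - 1)
/-! ### Auxiliary development -/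

lemma mem_VS_iff {S : Finset Rule} {i v : ℕ} : v ∈ VS S i ↔ ∃ r ∈ S, (i, v) ∈ r.K := by
  simp only [VS, Finset.mem_image, Finset.mem_filter, Finset.mem_biUnion]
  constructor
  · rintro ⟨p, ⟨⟨r, hr, hp⟩, h1⟩, h2⟩
    refine ⟨r, hr, ?_⟩
    have : p = (i, v) := Prod.ext h1 h2
    rwa [this] at hp
  · rintro ⟨r, hr, hp⟩
    exact ⟨(i, v), ⟨⟨r, hr, hp⟩, rfl⟩, rfl⟩

lemma mem_attrs_iff {S : Finset Rule} {i : ℕ} :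
    i ∈ attrs S ↔ ∃ r ∈ S, ∃ v, (i, v) ∈ r.K := by
  simp only [attrs, Rule.attrs, Finset.mem_biUnion, Finset.mem_image]
  constructor
  · rintro ⟨r, hr, p, hp, h1⟩
    exact ⟨r, hr, p.2, by rwa [show (i, p.2) = p from Prod.ext h1.symm rfl]⟩
  · rintro ⟨r, hr, v, hv⟩
    exact ⟨r, hr, (i, v), hv, rfl⟩

lemma VS_nonempty {S : Finset Rule} {i : ℕ} (h : i ∈ attrs S) : (VS S i).Nonempty := by
  obtain ⟨r, hr, v, hv⟩ := mem_attrs_iff.1 h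
  exact ⟨v, mem_VS_iff.2 ⟨r, hr, hv⟩⟩

lemma mem_liftK {K : Finset (ℕ × ℕ)} {q : ℕ × Option ℕ} :
    q ∈ liftK K ↔ ∃ p ∈ K, q = (p.1, some p.2) := by
  simp only [liftK, Finset.mem_image]
  constructor
  · rintro ⟨p, hp, rfl⟩; exact ⟨p, hp, rfl⟩
  · rintro ⟨p, hp, rfl⟩; exact ⟨p, hp, rfl⟩

lemma pathEqs_nil (G : DGraph) : G.pathEqs [] = ∅ := by
  simp [DGraph.pathEqs]

lemma pathEqs_cons_inl {G : DGraph} {u a : ℕ} (h : G.label u = Sum.inl a)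
    (lab : Option ℕ) (p : List (ℕ × Option ℕ)) :
    G.pathEqs ((u, lab) :: p) = insert (a, lab) (G.pathEqs p) := by
  simp [DGraph.pathEqs, List.filterMap_cons, h]

namespace FullTree

/-- An upper bound for the values occurring in `S`. -/
def Kbound (S : Finset Rule) : ℕ := (S.biUnion Rule.K).sup Prod.snd + 1

lemma VS_lt_Kbound {S : Finset Rule} {i v : ℕ} (h : v ∈ VS S i) : v < Kbound S := by
  obtain ⟨r, hr, hv⟩ := mem_VS_iff.1 h
  have : (i, v) ∈ S.biUnion Rule.K := Finset.mem_biUnion.2 ⟨r, hr, hv⟩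
  have := Finset.le_sup (f := Prod.snd) this
  simpa [Kbound, Nat.lt_succ_iff] using this

/-- Valid prefixes of assignments. -/
def Valid (S : Finset Rule) (l : List ℕ) : Prop :=
  ∀ t (h : t < l.length), l[t] ∈ VS S t

def allLists (S : Finset Rule) : ℕ → Finset (List ℕ)
  | 0 => {[]}
  | (j+1) => (allLists S j ×ˢ Finset.range (Kbound S)).image fun p => p.1 ++ [p.2]

lemma mem_allLists {S : Finset Rule} : ∀ {j : ℕ} {l : List ℕ},
    l ∈ allLists S j ↔ l.length = j ∧ ∀ v ∈ l, v < Kbound S := by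
  intro j
  induction j with
  | zero =>
    intro l
    simp only [allLists, Finset.mem_singleton]
    constructor
    · rintro rfl; simp
    · rintro ⟨h, _⟩; exact List.length_eq_zero_iff.1 h
  | succ j ih =>
    intro l
    simp only [allLists, Finset.mem_image, Finset.mem_product, Finset.mem_range]
    constructor
    · rintro ⟨⟨l', v⟩, ⟨hl', hv⟩, rfl⟩
      obtain ⟨hlen, hmem⟩ := ih.1 hl'
      refine ⟨by simp [hlen], ?_⟩
      intro x hx
      rcases List.mem_append.1 hx with h | h
      · exact hmem x h
      · simpa [List.eq_of_mem_singleton h]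
    · rintro ⟨hlen, hmem⟩
      have hne : l ≠ [] := by
        intro h; rw [h] at hlen; simp at hlen
      refine ⟨(l.dropLast, l.getLast hne), ⟨ih.2 ⟨?_, ?_⟩, ?_⟩, ?_⟩
      · rw [List.length_dropLast, hlen]; rfl
      · intro v hv; exact hmem v ((List.dropLast_sublist l).subset hv)
      · exact hmem _ (List.getLast_mem hne)
      · exact List.dropLast_append_getLast hne

/-- All valid prefixes of length at most `m`: the node set of the full tree. -/
def Nodes (S : Finset Rule) (m : ℕ) : Finset (List ℕ) :=
  ((Finset.range (m+1)).biUnion (allLists S)).filter (Valid S)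

lemma mem_Nodes {S : Finset Rule} {m : ℕ} {l : List ℕ} :
    l ∈ Nodes S m ↔ l.length ≤ m ∧ Valid S l := by
  simp only [Nodes, Finset.mem_filter, Finset.mem_biUnion, Finset.mem_range]
  constructor
  · rintro ⟨⟨j, hj, hl⟩, hv⟩
    have := (mem_allLists.1 hl).1
    exact ⟨by omega, hv⟩
  · rintro ⟨hlen, hv⟩
    refine ⟨⟨l.length, by omega, mem_allLists.2 ⟨rfl, ?_⟩⟩, hv⟩
    intro v hv'
    obtain ⟨t, ht, rfl⟩ := List.mem_iff_getElem.1 hv'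
    exact VS_lt_Kbound (hv t ht)

end FullTree
namespace FullTree

lemma nil_mem_Nodes {S : Finset Rule} {m : ℕ} : [] ∈ Nodes S m :=
  mem_Nodes.2 ⟨by simp, fun t h => by simp at h⟩

lemma concat_mem_Nodes {S : Finset Rule} {m : ℕ} {l : List ℕ} {v : ℕ}
    (hl : l ∈ Nodes S m) (hlen : l.length < m) (hv : v ∈ VS S l.length) :
    l ++ [v] ∈ Nodes S m := by
  obtain ⟨h1, h2⟩ := mem_Nodes.1 hl
  refine mem_Nodes.2 ⟨by simp; omega, ?_⟩
  intro t ht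
  simp only [List.length_append, List.length_singleton] at ht
  rcases Nat.lt_or_ge t l.length with h | h
  · rw [List.getElem_append_left h]; exact h2 t h
  · have ht' : t = l.length := by omega
    rw [List.getElem_concat_length ht']
    rw [ht']; exact hv

lemma dropLast_mem_Nodes {S : Finset Rule} {m : ℕ} {l : List ℕ}
    (hl : l ∈ Nodes S m) (h : l ≠ []) :
    l.dropLast ∈ Nodes S m ∧ l.getLast h ∈ VS S l.dropLast.length := by
  obtain ⟨h1, h2⟩ := mem_Nodes.1 hl
  have hpos : 0 < l.length := List.length_pos_iff.2 h
  have hdl : l.dropLast.length = l.length - 1 := List.length_dropLast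
  constructor
  · refine mem_Nodes.2 ⟨by omega, ?_⟩
    intro t ht
    rw [hdl] at ht
    have h3 : l.dropLast[t]'(by rw [hdl]; omega) = l[t]'(by omega) :=
      List.getElem_dropLast (by rw [hdl]; omega)
    rw [h3]; exact h2 t (by omega)
  · rw [List.getLast_eq_getElem h, hdl]
    exact h2 (l.length - 1) (by omega)

noncomputable def idx (S : Finset Rule) (m : ℕ) (l : List ℕ) : ℕ :=
  if h : l ∈ Nodes S m then ((Nodes S m).equivFin ⟨l, h⟩ : Fin _).val else 0

noncomputable def decode (S : Finset Rule) (m : ℕ) (v : ℕ) : List ℕ :=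
  if h : v < (Nodes S m).card then ((Nodes S m).equivFin.symm ⟨v, h⟩ : { x // x ∈ Nodes S m }).val
  else []

lemma idx_lt {S : Finset Rule} {m : ℕ} {l : List ℕ} (h : l ∈ Nodes S m) :
    idx S m l < (Nodes S m).card := by
  rw [idx, dif_pos h]; exact ((Nodes S m).equivFin ⟨l, h⟩).isLt

lemma decode_idx {S : Finset Rule} {m : ℕ} {l : List ℕ} (h : l ∈ Nodes S m) :
    decode S m (idx S m l) = l := by
  rw [decode, dif_pos (idx_lt h)]
  have : (⟨idx S m l, idx_lt h⟩ : Fin (Nodes S m).card) = (Nodes S m).equivFin ⟨l, h⟩ := by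
    apply Fin.ext; simp only [idx]; rw [dif_pos h]
  rw [this, Equiv.symm_apply_apply]

lemma decode_mem {S : Finset Rule} {m : ℕ} {v : ℕ} (h : v < (Nodes S m).card) :
    decode S m v ∈ Nodes S m := by
  rw [decode, dif_pos h]; exact ((Nodes S m).equivFin.symm ⟨v, h⟩).prop

lemma idx_decode {S : Finset Rule} {m : ℕ} {v : ℕ} (h : v < (Nodes S m).card) :
    idx S m (decode S m v) = v := by
  rw [idx, dif_pos (decode_mem h)]
  have : (⟨decode S m v, decode_mem h⟩ : { x // x ∈ Nodes S m }) =
      (Nodes S m).equivFin.symm ⟨v, h⟩ := by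
    apply Subtype.ext; simp only [decode]; rw [dif_pos h]
  rw [this, Equiv.apply_symm_apply]

lemma idx_inj {S : Finset Rule} {m : ℕ} {l1 l2 : List ℕ} (h1 : l1 ∈ Nodes S m)
    (h2 : l2 ∈ Nodes S m) (h : idx S m l1 = idx S m l2) : l1 = l2 := by
  have := decode_idx h1
  rw [h, decode_idx h2] at this
  exact this.symm

/-- The equation system given by a list of values, starting at attribute `j`. -/
def enumEqsFrom : ℕ → List ℕ → Finset (ℕ × Option ℕ)
  | _, [] => ∅
  | j, (v :: l) => insert (j, some v) (enumEqsFrom (j+1) l)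

lemma mem_enumEqsFrom : ∀ {l : List ℕ} {j : ℕ} {q : ℕ × Option ℕ},
    q ∈ enumEqsFrom j l ↔ ∃ t, ∃ h : t < l.length, q = (j + t, some l[t]) := by
  intro l
  induction l with
  | nil => intro j q; simp [enumEqsFrom]
  | cons v l ih =>
    intro j q
    simp only [enumEqsFrom, Finset.mem_insert, ih]
    constructor
    · rintro (rfl | ⟨t, ht, rfl⟩)
      · exact ⟨0, by simp, by simp⟩
      · exact ⟨t + 1, by simp; omega, by simp [List.getElem_cons_succ]; omega⟩
    · rintro ⟨t, ht, rfl⟩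
      cases t with
      | zero => left; simp
      | succ t =>
        right
        refine ⟨t, by simpa [Nat.succ_lt_succ_iff] using ht, ?_⟩
        simp [List.getElem_cons_succ]; omega

lemma enumEqsFrom_append (l1 l2 : List ℕ) : ∀ (j : ℕ),
    enumEqsFrom j (l1 ++ l2) = enumEqsFrom j l1 ∪ enumEqsFrom (j + l1.length) l2 := by
  induction l1 with
  | nil => intro j; simp [enumEqsFrom]
  | cons v l ih =>
    intro j
    have h1 : (v :: l) ++ l2 = v :: (l ++ l2) := rfl
    rw [h1]
    show insert (j, some v) (enumEqsFrom (j + 1) (l ++ l2)) =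
        insert (j, some v) (enumEqsFrom (j + 1) l) ∪ enumEqsFrom (j + (v :: l).length) l2
    rw [ih (j + 1), Finset.insert_union]
    have h2 : j + 1 + l.length = j + (v :: l).length := by simp [List.length_cons]; omega
    rw [h2]

def enumEqs (l : List ℕ) : Finset (ℕ × Option ℕ) := enumEqsFrom 0 l

lemma mem_enumEqs {l : List ℕ} {q : ℕ × Option ℕ} :
    q ∈ enumEqs l ↔ ∃ t, ∃ h : t < l.length, q = (t, some l[t]) := by
  rw [enumEqs, mem_enumEqsFrom]
  constructor
  · rintro ⟨t, ht, rfl⟩; exact ⟨t, ht, by simp⟩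
  · rintro ⟨t, ht, rfl⟩; exact ⟨t, ht, by simp⟩

lemma enumEqs_nil : enumEqs [] = ∅ := rfl

lemma enumEqs_concat (l : List ℕ) (v : ℕ) :
    enumEqs (l ++ [v]) = insert (l.length, some v) (enumEqs l) := by
  rw [enumEqs, enumEqsFrom_append]
  show enumEqsFrom 0 l ∪ insert (0 + l.length, some v) ∅ = _
  rw [Nat.zero_add]
  ext q
  simp only [Finset.mem_union, Finset.mem_insert, Finset.notMem_empty, or_false,
    enumEqs]
  tauto

end FullTree
namespace FullTree

variable (S : Finset Rule) (m : ℕ)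

noncomputable def flabel (v : ℕ) : ℕ ⊕ Finset Rule :=
  if (decode S m v).length < m then Sum.inl (decode S m v).length
  else Sum.inr (S.filter fun r => liftK r.K ⊆ enumEqs (decode S m v))

noncomputable def fedges : Finset (ℕ × Option ℕ × ℕ) :=
  ((((Nodes S m).filter fun l => l.length < m) ×ˢ Finset.range (Kbound S)).filter
      fun p => p.2 ∈ VS S p.1.length).image
    fun p => (idx S m p.1, some p.2, idx S m (p.1 ++ [p.2]))

noncomputable def FT : DGraph := ⟨(Nodes S m).card, idx S m [], flabel S m, fedges S m⟩

variable {S m}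

lemma mem_fedges {e : ℕ × Option ℕ × ℕ} :
    e ∈ fedges S m ↔ ∃ l v, l ∈ Nodes S m ∧ l.length < m ∧ v ∈ VS S l.length ∧
      e = (idx S m l, some v, idx S m (l ++ [v])) := by
  simp only [fedges, Finset.mem_image, Finset.mem_filter, Finset.mem_product,
    Finset.mem_range]
  constructor
  · rintro ⟨⟨l, v⟩, ⟨⟨⟨hl, hlen⟩, _⟩, hv⟩, rfl⟩
    exact ⟨l, v, hl, hlen, hv, rfl⟩
  · rintro ⟨l, v, hl, hlen, hv, rfl⟩
    exact ⟨⟨l, v⟩, ⟨⟨⟨hl, hlen⟩, VS_lt_Kbound hv⟩, hv⟩, rfl⟩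

lemma FT_n : (FT S m).n = (Nodes S m).card := rfl
lemma FT_root : (FT S m).root = idx S m [] := rfl
lemma FT_edges : (FT S m).edges = fedges S m := rfl
lemma FT_label (v : ℕ) : (FT S m).label v = flabel S m v := rfl

lemma step_decode {u w : ℕ} (h : (FT S m).step u w) :
    u < (Nodes S m).card ∧ w < (Nodes S m).card ∧
      (decode S m w).length = (decode S m u).length + 1 := by
  obtain ⟨lab, he⟩ := h
  obtain ⟨l, v, hl, hlen, hv, heq⟩ := mem_fedges.1 he
  have h1 : u = idx S m l := congrArg (fun e => e.1) heq
  have h2 : w = idx S m (l ++ [v]) := congrArg (fun e => e.2.2) heq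
  have hlv : l ++ [v] ∈ Nodes S m := concat_mem_Nodes hl hlen hv
  subst h1 h2
  refine ⟨idx_lt hl, idx_lt hlv, ?_⟩
  rw [decode_idx hl, decode_idx hlv]
  simp

lemma FT_acyclic : (FT S m).Acyclic := by
  intro v hv
  have mono : ∀ a b, Relation.TransGen (FT S m).step a b →
      (decode S m a).length < (decode S m b).length := by
    intro a b h
    induction h with
    | single h => have := step_decode h; omega
    | tail _ h ih => have := step_decode h; omega
  exact absurd (mono v v hv) (lt_irrefl _)

lemma terminal_iff (hattrs : attrs S = Finset.range m) {v : ℕ} (hv : v < (Nodes S m).card) :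
    (FT S m).IsTerminal v ↔ (decode S m v).length = m := by
  have hmem := decode_mem hv
  have hlen := (mem_Nodes.1 hmem).1
  constructor
  · intro ht
    by_contra hne
    have hlt : (decode S m v).length < m := by omega
    have hA : (decode S m v).length ∈ attrs S := by
      rw [hattrs]; exact Finset.mem_range.2 hlt
    obtain ⟨w, hw⟩ := VS_nonempty hA
    have he : (idx S m (decode S m v), some w, idx S m (decode S m v ++ [w])) ∈ fedges S m :=
      mem_fedges.2 ⟨decode S m v, w, hmem, hlt, hw, rfl⟩
    rw [idx_decode hv] at he
    exact ht _ he rfl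
  · intro hlen' e he h1
    obtain ⟨l, w, hl, hlw, _, heq⟩ := mem_fedges.1 he
    have : e.1 = idx S m l := congrArg (fun e => e.1) heq
    rw [h1] at this
    have : decode S m v = l := by rw [this, decode_idx hl]
    rw [this] at hlen'
    omega

lemma FT_isDG (hm : 0 < m) (hattrs : attrs S = Finset.range m) :
    (FT S m).IsDG S false := by
  refine ⟨idx_lt nil_mem_Nodes, ?_, FT_acyclic, ?_⟩
  · intro e he
    obtain ⟨l, v, hl, hlen, hv, rfl⟩ := mem_fedges.1 he
    exact ⟨idx_lt hl, idx_lt (concat_mem_Nodes hl hlen hv)⟩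
  · intro v hv
    have hmem := decode_mem hv
    have hlen := (mem_Nodes.1 hmem).1
    by_cases hfull : (decode S m v).length = m
    · rw [if_pos ((terminal_iff hattrs hv).2 hfull)]
      refine ⟨S.filter fun r => liftK r.K ⊆ enumEqs (decode S m v), ?_, Finset.filter_subset _ _⟩
      rw [FT_label, flabel, if_neg (by omega)]
    · have hlt : (decode S m v).length < m := by omega
      rw [if_neg (fun ht => hfull ((terminal_iff hattrs hv).1 ht))]
      refine ⟨(decode S m v).length, ?_, ?_, ?_, ?_⟩
      · rw [FT_label, flabel, if_pos hlt]
      · rw [hattrs]; exact Finset.mem_range.2 hlt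
      · intro lab
        constructor
        · rintro ⟨w, hw⟩
          obtain ⟨l, x, hl, hlx, hx, heq⟩ := mem_fedges.1 hw
          have h1 : v = idx S m l := congrArg (fun e => e.1) heq
          have h2 : lab = some x := congrArg (fun e => e.2.1) heq
          have hld : l = decode S m v := by rw [h1, decode_idx hl]
          subst hld
          rw [h2]
          simp only [allowed, Finset.mem_union, Finset.mem_image]
          exact Or.inl ⟨x, hx, rfl⟩
        · intro hlab
          simp only [allowed, if_neg (Bool.false_ne_true), Finset.union_empty,
            Finset.mem_image] at hlab
          obtain ⟨x, hx, rfl⟩ := hlab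
          refine ⟨idx S m (decode S m v ++ [x]), ?_⟩
          have := mem_fedges.2 ⟨decode S m v, x, hmem, hlt, hx, rfl⟩
          rwa [idx_decode hv] at this
      · intro lab w w' hw hw'
        obtain ⟨l1, x1, hl1, hlen1, hx1, heq1⟩ := mem_fedges.1 hw
        obtain ⟨l2, x2, hl2, hlen2, hx2, heq2⟩ := mem_fedges.1 hw'
        have e11 : v = idx S m l1 := congrArg (fun e => e.1) heq1
        have e12 : lab = some x1 := congrArg (fun e => e.2.1) heq1
        have e13 : w = idx S m (l1 ++ [x1]) := congrArg (fun e => e.2.2) heq1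
        have e21 : v = idx S m l2 := congrArg (fun e => e.1) heq2
        have e22 : lab = some x2 := congrArg (fun e => e.2.1) heq2
        have e23 : w' = idx S m (l2 ++ [x2]) := congrArg (fun e => e.2.2) heq2
        have hl12 : l1 = l2 := idx_inj hl1 hl2 (e11 ▸ e21)
        have hx12 : x1 = x2 := by rw [e12] at e22; exact Option.some.inj e22
        rw [e13, e23, hl12, hx12]

lemma FT_isTree (hm : 0 < m) : (FT S m).IsTree := by
  constructor
  · intro e he
    obtain ⟨l, v, hl, hlen, hv, rfl⟩ := mem_fedges.1 he
    intro hroot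
    have : l ++ [v] = [] :=
      idx_inj (concat_mem_Nodes hl hlen hv) nil_mem_Nodes hroot
    simp at this
  · intro v hv hne
    have hmem := decode_mem hv
    have hlen := (mem_Nodes.1 hmem).1
    have hdne : decode S m v ≠ [] := by
      intro h
      apply hne
      rw [FT_root, ← h, idx_decode hv]
    obtain ⟨hdrop, hlast⟩ := dropLast_mem_Nodes hmem hdne
    have hdl : (decode S m v).dropLast.length < m := by
      have h1 : (decode S m v).dropLast.length = (decode S m v).length - 1 := List.length_dropLast
      have h2 : 0 < (decode S m v).length := List.length_pos_iff.2 hdne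
      omega
    have hcat : (decode S m v).dropLast ++ [(decode S m v).getLast hdne] = decode S m v :=
      List.dropLast_append_getLast hdne
    refine ⟨(idx S m (decode S m v).dropLast, some ((decode S m v).getLast hdne), v), ⟨?_, rfl⟩, ?_⟩
    · refine mem_fedges.2 ⟨_, _, hdrop, hdl, hlast, ?_⟩
      rw [hcat, idx_decode hv]
    · rintro e ⟨he, hw⟩
      obtain ⟨l, x, hl, hlx, hx, heq⟩ := mem_fedges.1 he
      subst heq
      simp only at hw
      have hlx' : l ++ [x] ∈ Nodes S m := concat_mem_Nodes hl hlx hx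
      have hveq : l ++ [x] = decode S m v := by
        have h5 : decode S m (idx S m (l ++ [x])) = decode S m v := by rw [hw]
        rwa [decode_idx hlx'] at h5
      have hl' : l = (decode S m v).dropLast := by rw [← hveq, List.dropLast_concat]
      have hx' : (decode S m v).getLast hdne = x := by
        have h2 : (l ++ [x]).getLast (by simp) = x := List.getLast_concat
        rw [← h2]
        congr 1
        exact hveq.symm
      rw [hveq, idx_decode hv, hl', ← hx']

end FullTree
namespace FullTree

variable {S : Finset Rule} {m : ℕ}

lemma chain_eqs (hattrs : attrs S = Finset.range m) :
    ∀ (p : List (ℕ × Option ℕ)) (l : List ℕ) (t : ℕ),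
    l ∈ Nodes S m → (FT S m).chainFrom (idx S m l) p t → (FT S m).IsTerminal t →
    t < (Nodes S m).card →
    ∃ lt, lt ∈ Nodes S m ∧ idx S m lt = t ∧ lt.length = m ∧
      (FT S m).pathEqs p ∪ enumEqs l = enumEqs lt ∧
      ∀ q ∈ (FT S m).pathEqs p, l.length ≤ q.1 := by
  intro p
  induction p with
  | nil =>
    intro l t hl hc hterm ht
    have hlt : idx S m l = t := hc
    have hlen : l.length = m := by
      have := (terminal_iff hattrs ht).1 hterm
      rwa [← hlt, decode_idx hl] at this
    exact ⟨l, hl, hlt, hlen, by rw [pathEqs_nil, Finset.empty_union],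
      fun q hq => by rw [pathEqs_nil] at hq; exact absurd hq (Finset.notMem_empty q)⟩
  | cons e rest ih =>
    intro l t hl hc hterm ht
    obtain ⟨he1, w, hw, hrest⟩ := hc
    obtain ⟨l', x, hl', hlx', hx', heq⟩ := mem_fedges.1 hw
    have e1 : idx S m l = idx S m l' := congrArg (fun e => e.1) heq
    have hll' : l = l' := idx_inj hl hl' e1
    subst hll'
    have e2 : e.2 = some x := congrArg (fun e => e.2.1) heq
    have e3 : w = idx S m (l ++ [x]) := congrArg (fun e => e.2.2) heq
    have hcat : l ++ [x] ∈ Nodes S m := concat_mem_Nodes hl hlx' hx'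
    rw [e3] at hrest
    obtain ⟨lt, hlt, hidx, hltlen, hunion, hbound⟩ := ih (l ++ [x]) t hcat hrest hterm ht
    have hlabel : (FT S m).label e.1 = Sum.inl l.length := by
      rw [he1, FT_label, flabel, decode_idx hl, if_pos hlx']
    have hpe : (FT S m).pathEqs (e :: rest) =
        insert (l.length, e.2) ((FT S m).pathEqs rest) := by
      have : e = (e.1, e.2) := rfl
      rw [this, pathEqs_cons_inl hlabel]
    refine ⟨lt, hlt, hidx, hltlen, ?_, ?_⟩
    · rw [hpe, e2, Finset.insert_union, ← hunion, enumEqs_concat]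
      ext q
      simp only [Finset.mem_insert, Finset.mem_union]
      tauto
    · intro q hq
      rw [hpe] at hq
      rcases Finset.mem_insert.1 hq with rfl | hq
      · exact le_refl _
      · have := hbound q hq
        simp only [List.length_append, List.length_singleton] at this
        omega

lemma FT_solvesAD (hattrs : attrs S = Finset.range m) : (FT S m).SolvesAD S := by
  intro p t hcp _hcons
  obtain ⟨hchain, hterm, ht⟩ := hcp
  obtain ⟨lt, hlt, hidx, hltlen, hunion, _⟩ :=
    chain_eqs hattrs p [] t nil_mem_Nodes hchain hterm ht
  have hpeq : (FT S m).pathEqs p = enumEqs lt := by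
    rw [← hunion, enumEqs_nil, Finset.union_empty]
  have htermset : (FT S m).termSet t = S.filter fun r => liftK r.K ⊆ enumEqs lt := by
    rw [DGraph.termSet]
    have : (FT S m).label t = Sum.inr (S.filter fun r => liftK r.K ⊆ enumEqs (decode S m t)) := by
      rw [FT_label, flabel, if_neg]
      rw [← hidx, decode_idx hlt, hltlen]
      omega
    rw [this, ← hidx, decode_idx hlt]
    rfl
  constructor
  · intro r hr
    rw [htermset] at hr
    rw [hpeq]
    exact (Finset.mem_filter.1 hr).2
  · intro r hrS hrnot _
    rw [htermset] at hrnot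
    have : ¬ liftK r.K ⊆ enumEqs lt := by
      intro hsub
      exact hrnot (Finset.mem_filter.2 ⟨hrS, hsub⟩)
    obtain ⟨q, hq, hqnot⟩ := Finset.not_subset.1 this
    obtain ⟨pr, hpr, rfl⟩ := mem_liftK.1 hq
    have hattr : pr.1 ∈ attrs S := mem_attrs_iff.2 ⟨r, hrS, pr.2, by
      rw [show (pr.1, pr.2) = pr from rfl]; exact hpr⟩
    have hi : pr.1 < lt.length := by
      rw [hltlen]
      rw [hattrs] at hattr
      exact Finset.mem_range.1 hattr
    have hin : (pr.1, some (lt[pr.1]'hi)) ∈ enumEqs lt := mem_enumEqs.2 ⟨pr.1, hi, rfl⟩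
    intro hconsU
    have h1 : (pr.1, some pr.2) ∈ liftK r.K ∪ (FT S m).pathEqs p := Finset.mem_union_left _ hq
    have h2 : (pr.1, some (lt[pr.1]'hi)) ∈ liftK r.K ∪ (FT S m).pathEqs p := by
      rw [hpeq]; exact Finset.mem_union_right _ hin
    have := hconsU _ h1 _ h2 rfl
    simp only [Option.some.injEq] at this
    apply hqnot
    rw [this]
    exact hin

theorem exists_tree_solvesAD (S : Finset Rule) (m : ℕ) (hm : 0 < m)
    (hattrs : attrs S = Finset.range m) : ∃ G : DGraph, TreeSolvesAD S G :=
  ⟨FT S m, FT_isDG hm hattrs, FT_isTree hm, FT_solvesAD hattrs⟩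

end FullTree
section Walk

lemma walk_aux (S : Finset Rule) (G : DGraph) (hdg : G.IsDG S false) (σ : ℕ → ℕ)
    (hσ : ∀ a ∈ attrs S, σ a ∈ VS S a) :
    ∀ N (F : Finset ℕ), F.card ≤ N → ∀ v, v < G.n →
      (∀ w, Relation.ReflTransGen G.step v w → w ∈ F) →
      ∃ p t, G.chainFrom v p t ∧ G.IsTerminal t ∧ t < G.n ∧
        ∀ q ∈ G.pathEqs p, ∃ a, q = (a, some (σ a)) := by
  obtain ⟨hroot, hedge, hacyc, hlab⟩ := hdg
  intro N
  induction N with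
  | zero =>
    intro F hF v hv hreach
    have : v ∈ F := hreach v Relation.ReflTransGen.refl
    have := Finset.card_pos.2 ⟨v, this⟩
    omega
  | succ N ih =>
    intro F hF v hv hreach
    by_cases hterm : G.IsTerminal v
    · exact ⟨[], v, rfl, hterm, hv, fun q hq => by
        rw [pathEqs_nil] at hq; exact absurd hq (Finset.notMem_empty q)⟩
    · have := hlab v hv
      rw [if_neg hterm] at this
      obtain ⟨a, hla, haA, hiff, _⟩ := this
      have hσa : some (σ a) ∈ allowed S false a := by
        simp only [allowed, if_neg (Bool.false_ne_true), Finset.union_empty,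
          Finset.mem_image]
        exact ⟨σ a, hσ a haA, rfl⟩
      obtain ⟨w, hw⟩ := (hiff (some (σ a))).2 hσa
      have hstep : G.step v w := ⟨some (σ a), hw⟩
      have hwn : w < G.n := (hedge _ hw).2
      have hvF : v ∈ F := hreach v Relation.ReflTransGen.refl
      have hsub : ∀ u, Relation.ReflTransGen G.step w u → u ∈ F.erase v := by
        intro u hu
        refine Finset.mem_erase.2 ⟨?_, hreach u (Relation.ReflTransGen.head hstep hu)⟩
        intro huv
        rw [huv] at hu
        exact hacyc v (Relation.TransGen.head' hstep hu)
      have hcard : (F.erase v).card ≤ N := by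
        have := Finset.card_erase_of_mem hvF
        have := Finset.card_pos.2 ⟨v, hvF⟩
        omega
      obtain ⟨p, t, hc, ht, htn, hq⟩ := ih (F.erase v) hcard w hwn hsub
      refine ⟨(v, some (σ a)) :: p, t, ⟨rfl, w, hw, hc⟩, ht, htn, ?_⟩
      intro q hqmem
      rw [pathEqs_cons_inl hla] at hqmem
      rcases Finset.mem_insert.1 hqmem with rfl | hqmem
      · exact ⟨a, rfl⟩
      · exact hq q hqmem

lemma exists_walk (S : Finset Rule) (G : DGraph) (hdg : G.IsDG S false) (σ : ℕ → ℕ)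
    (hσ : ∀ a ∈ attrs S, σ a ∈ VS S a) :
    ∃ p t, G.IsCompletePath p t ∧ ∀ q ∈ G.pathEqs p, ∃ a, q = (a, some (σ a)) := by
  have hreach : ∀ w, Relation.ReflTransGen G.step G.root w → w ∈ Finset.range G.n := by
    intro w hw
    induction hw with
    | refl => exact Finset.mem_range.2 hdg.1
    | tail _ hstep ih =>
      obtain ⟨lab, he⟩ := hstep
      exact Finset.mem_range.2 (hdg.2.1 _ he).2
  obtain ⟨p, t, hc, ht, htn, hq⟩ :=
    walk_aux S G hdg σ hσ (Finset.range G.n).card _ (le_refl _) G.root hdg.1 hreach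
  exact ⟨p, t, ⟨hc, ht, htn⟩, hq⟩

end Walk
namespace Example5

/-- Short rule `(a_i = δ) → 2i+δ`. -/
def Rsh (i δ : ℕ) : Rule := ⟨{(i, δ)}, 2*i+δ⟩

def yPart (n e : ℕ) : Finset (ℕ × ℕ) := (Finset.range e).image fun t => (n+t, 0)

/-- Long rule `(a_n = 0) ∧ ⋯ ∧ (a_{n+d-1} = 0) → 2n`. -/
def L0 (n d : ℕ) : Rule := ⟨yPart n d, 2*n⟩

/-- Long rule `(a_0 = j+2) ∧ (a_n = 0) ∧ ⋯ ∧ (a_{n+d-2} = 0) → 2n`. -/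
def Lj (n d j : ℕ) : Rule := ⟨insert (0, j+2) (yPart n (d-1)), 2*n⟩

def sys (n d k : ℕ) : Finset Rule :=
  (((Finset.range n) ×ˢ (Finset.range 2)).image fun p => Rsh p.1 p.2) ∪
    insert (L0 n d) ((Finset.range (k-2)).image (Lj n d))

lemma mem_yPart {n e a b : ℕ} : (a, b) ∈ yPart n e ↔ ∃ t < e, a = n + t ∧ b = 0 := by
  simp only [yPart, Finset.mem_image, Finset.mem_range, Prod.mk.injEq]
  constructor
  · rintro ⟨t, ht, rfl, rfl⟩; exact ⟨t, ht, rfl, rfl⟩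
  · rintro ⟨t, ht, rfl, rfl⟩; exact ⟨t, ht, rfl, rfl⟩

lemma mem_sys {n d k : ℕ} {r : Rule} :
    r ∈ sys n d k ↔ (∃ i < n, ∃ δ < 2, r = Rsh i δ) ∨ r = L0 n d ∨
      ∃ j < k - 2, r = Lj n d j := by
  simp only [sys, Finset.mem_union, Finset.mem_insert, Finset.mem_image,
    Finset.mem_product, Finset.mem_range]
  constructor
  · rintro (⟨⟨i, δ⟩, ⟨hi, hδ⟩, rfl⟩ | h | ⟨j, hj, rfl⟩)
    · exact Or.inl ⟨i, hi, δ, hδ, rfl⟩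
    · exact Or.inr (Or.inl h)
    · exact Or.inr (Or.inr ⟨j, hj, rfl⟩)
  · rintro (⟨i, hi, δ, hδ, rfl⟩ | rfl | ⟨j, hj, rfl⟩)
    · exact Or.inl ⟨⟨i, δ⟩, ⟨hi, hδ⟩, rfl⟩
    · exact Or.inr (Or.inl rfl)
    · exact Or.inr (Or.inr ⟨j, hj, rfl⟩)

variable {n d k : ℕ}

lemma mem_K_Rsh {i δ a b : ℕ} : (a, b) ∈ (Rsh i δ).K ↔ a = i ∧ b = δ := by
  simp [Rsh, Prod.mk.injEq]

lemma mem_K_L0 {a b : ℕ} : (a, b) ∈ (L0 n d).K ↔ ∃ t < d, a = n + t ∧ b = 0 :=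
  mem_yPart

lemma mem_K_Lj {j a b : ℕ} :
    (a, b) ∈ (Lj n d j).K ↔ (a = 0 ∧ b = j + 2) ∨ ∃ t < d - 1, a = n + t ∧ b = 0 := by
  simp only [Lj, Finset.mem_insert, Prod.mk.injEq, mem_yPart]

lemma sys_WF (hn : 0 < n) : ∀ r ∈ sys n d k, r.WF := by
  intro r hr
  rcases mem_sys.1 hr with ⟨i, _, δ, _, rfl⟩ | rfl | ⟨j, _, rfl⟩
  · rintro ⟨a, b⟩ ha ⟨c, e⟩ hc h
    rw [mem_K_Rsh] at ha hc
    simp only at h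
    simp [ha.1, ha.2, hc.1, hc.2]
  · rintro ⟨a, b⟩ ha ⟨c, e⟩ hc h
    rw [mem_K_L0] at ha hc
    obtain ⟨t, _, rfl, rfl⟩ := ha
    obtain ⟨t', _, h1, rfl⟩ := hc
    simp only at h
    simp [h, h1]
  · rintro ⟨a, b⟩ ha ⟨c, e⟩ hc h
    rw [mem_K_Lj] at ha hc
    simp only at h
    subst h
    rcases ha with ⟨rfl, rfl⟩ | ⟨t, _, rfl, rfl⟩ <;>
      rcases hc with ⟨h1, rfl⟩ | ⟨t', _, h1, rfl⟩
    · rfl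
    · omega
    · omega
    · simp

lemma mem_VS_sys {i v : ℕ} :
    v ∈ VS (sys n d k) i ↔ (∃ i' < n, ∃ δ < 2, i = i' ∧ v = δ) ∨
      (∃ t < d, i = n + t ∧ v = 0) ∨ (∃ j < k - 2, i = 0 ∧ v = j + 2) := by
  rw [mem_VS_iff]
  constructor
  · rintro ⟨r, hr, hiv⟩
    rcases mem_sys.1 hr with ⟨i', hi', δ, hδ, rfl⟩ | rfl | ⟨j, hj, rfl⟩
    · rw [mem_K_Rsh] at hiv; exact Or.inl ⟨i', hi', δ, hδ, hiv.1, hiv.2⟩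
    · rw [mem_K_L0] at hiv; exact Or.inr (Or.inl hiv)
    · rw [mem_K_Lj] at hiv
      rcases hiv with ⟨rfl, rfl⟩ | ⟨t, ht, rfl, rfl⟩
      · exact Or.inr (Or.inr ⟨j, hj, rfl, rfl⟩)
      · exact Or.inr (Or.inl ⟨t, by omega, rfl, rfl⟩)
  · rintro (⟨i', hi', δ, hδ, h1, h2⟩ | ⟨t, ht, h1, h2⟩ | ⟨j, hj, h1, h2⟩)
    · exact ⟨Rsh i' δ, mem_sys.2 (Or.inl ⟨i', hi', δ, hδ, rfl⟩), mem_K_Rsh.2 ⟨h1, h2⟩⟩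
    · exact ⟨L0 n d, mem_sys.2 (Or.inr (Or.inl rfl)), mem_K_L0.2 ⟨t, ht, h1, h2⟩⟩
    · exact ⟨Lj n d j, mem_sys.2 (Or.inr (Or.inr ⟨j, hj, rfl⟩)),
        mem_K_Lj.2 (Or.inl ⟨h1, h2⟩)⟩

lemma attrs_sys (hn : 0 < n) (hd : 0 < d) : attrs (sys n d k) = Finset.range (n + d) := by
  ext i
  rw [mem_attrs_iff, Finset.mem_range]
  constructor
  · rintro ⟨r, hr, v, hiv⟩
    rcases mem_sys.1 hr with ⟨i', hi', δ, _, rfl⟩ | rfl | ⟨j, _, rfl⟩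
    · rw [mem_K_Rsh] at hiv; omega
    · rw [mem_K_L0] at hiv; omega
    · rw [mem_K_Lj] at hiv
      rcases hiv with ⟨rfl, _⟩ | ⟨t, ht, rfl, _⟩ <;> omega
  · intro hi
    rcases Nat.lt_or_ge i n with h | h
    · exact ⟨Rsh i 0, mem_sys.2 (Or.inl ⟨i, h, 0, by omega, rfl⟩), 0, mem_K_Rsh.2 ⟨rfl, rfl⟩⟩
    · exact ⟨L0 n d, mem_sys.2 (Or.inr (Or.inl rfl)), 0,
        mem_K_L0.2 ⟨i - n, by omega, by omega, rfl⟩⟩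

lemma VS_sys_zero (hn : 0 < n) (hk : 2 ≤ k) : VS (sys n d k) 0 = Finset.range k := by
  ext v
  rw [mem_VS_sys, Finset.mem_range]
  constructor
  · rintro (⟨i', _, δ, hδ, _, rfl⟩ | ⟨t, _, h, rfl⟩ | ⟨j, hj, _, rfl⟩) <;> omega
  · intro hv
    rcases Nat.lt_or_ge v 2 with h | h
    · exact Or.inl ⟨0, hn, v, h, rfl, rfl⟩
    · exact Or.inr (Or.inr ⟨v - 2, by omega, rfl, by omega⟩)

lemma VS_sys_mid (hi : 0 < i) (hin : i < n) : VS (sys n d k) i = {0, 1} := by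
  ext v
  rw [mem_VS_sys]
  simp only [Finset.mem_insert, Finset.mem_singleton]
  constructor
  · rintro (⟨i', _, δ, hδ, _, rfl⟩ | ⟨t, _, h, rfl⟩ | ⟨j, _, h, _⟩) <;> omega
  · intro hv
    exact Or.inl ⟨i, hin, v, by omega, rfl, by omega⟩

lemma VS_sys_high (hn : 0 < n) (hi : n ≤ i) (hid : i < n + d) : VS (sys n d k) i = {0} := by
  have hn' : ¬ i < n := by omega
  ext v
  rw [mem_VS_sys]
  simp only [Finset.mem_singleton]
  constructor
  · rintro (⟨i', hi', δ, _, h, h2⟩ | ⟨t, _, h, h2⟩ | ⟨j, _, h, h2⟩) <;> omega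
  · intro hv
    exact Or.inr (Or.inl ⟨i - n, by omega, by omega, by omega⟩)

lemma kPar_sys (hn : 0 < n) (hd : 0 < d) (hk : 2 ≤ k) : kPar (sys n d k) = k := by
  apply le_antisymm
  · apply Finset.sup_le
    intro i hi
    rw [attrs_sys hn hd, Finset.mem_range] at hi
    rcases Nat.eq_zero_or_pos i with rfl | hipos
    · rw [VS_sys_zero hn hk, Finset.card_range]
    rcases Nat.lt_or_ge i n with h | h
    · rw [VS_sys_mid hipos h]
      have : ({0, 1} : Finset ℕ).card ≤ 2 := Finset.card_insert_le _ _ |>.trans (by simp)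
      omega
    · rw [VS_sys_high hn h hi, Finset.card_singleton]
      omega
  · have h0 : (0 : ℕ) ∈ attrs (sys n d k) := by
      rw [attrs_sys hn hd]; exact Finset.mem_range.2 (by omega)
    have := Finset.le_sup (f := fun i => (VS (sys n d k) i).card) h0
    simp only [VS_sys_zero hn hk, Finset.card_range] at this
    exact this

end Example5
namespace Example5

variable {n d k : ℕ}

lemma card_yPart (e : ℕ) : (yPart n e).card = e := by
  rw [yPart, Finset.card_image_of_injOn, Finset.card_range]
  intro a _ b _ h
  simpa using congrArg Prod.fst h

lemma len_Rsh (i δ : ℕ) : (Rsh i δ).len = 1 := rfl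

lemma len_L0 : (L0 n d).len = d := card_yPart d

lemma zero_not_mem_yPart (hn : 0 < n) (v e : ℕ) : (0, v) ∉ yPart n e := by
  intro h
  obtain ⟨t, _, h1, _⟩ := mem_yPart.1 h
  omega

lemma len_Lj (hn : 0 < n) (hd : 0 < d) (j : ℕ) : (Lj n d j).len = d := by
  rw [Rule.len, Lj]
  rw [Finset.card_insert_of_notMem (zero_not_mem_yPart hn _ _), card_yPart]
  omega

lemma dPar_sys (hn : 0 < n) (hd : 0 < d) : dPar (sys n d k) = d := by
  apply le_antisymm
  · apply Finset.sup_le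
    intro r hr
    rcases mem_sys.1 hr with ⟨i, _, δ, _, rfl⟩ | rfl | ⟨j, _, rfl⟩
    · rw [len_Rsh]; omega
    · rw [len_L0]
    · rw [len_Lj hn hd]
  · have := Finset.le_sup (f := Rule.len) (mem_sys.2 (Or.inr (Or.inl rfl)) :
      L0 n d ∈ sys n d k)
    rwa [len_L0] at this

lemma rhsSet_sys (hn : 0 < n) : rhsSet (sys n d k) = Finset.range (2*n+1) := by
  ext x
  rw [rhsSet, Finset.mem_range]
  simp only [Finset.mem_image]
  constructor
  · rintro ⟨r, hr, rfl⟩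
    rcases mem_sys.1 hr with ⟨i, hi, δ, hδ, rfl⟩ | rfl | ⟨j, _, rfl⟩
    · show 2*i+δ < 2*n+1; omega
    · show 2*n < 2*n+1; omega
    · show 2*n < 2*n+1; omega
  · intro hx
    rcases Nat.lt_or_ge x (2*n) with h | h
    · refine ⟨Rsh (x/2) (x%2), mem_sys.2 (Or.inl ⟨x/2, by omega, x%2, by omega, rfl⟩), ?_⟩
      show 2*(x/2) + x%2 = x
      omega
    · exact ⟨L0 n d, mem_sys.2 (Or.inr (Or.inl rfl)), by show 2*n = x; omega⟩

lemma Rsh_inj {i δ i' δ' : ℕ} (hδ : δ < 2) (hδ' : δ' < 2) (h : Rsh i δ = Rsh i' δ') :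
    i = i' ∧ δ = δ' := by
  have := congrArg Rule.rhs h
  simp only [Rsh] at this
  omega

lemma Lj_ne_L0 (hn : 0 < n) (j : ℕ) : Lj n d j ≠ L0 n d := by
  intro h
  have := congrArg Rule.K h
  have h2 : (0, j+2) ∈ (L0 n d).K := by
    rw [← this]; exact Finset.mem_insert_self _ _
  obtain ⟨t, _, h3, _⟩ := mem_K_L0.1 h2
  omega

lemma Rsh_rhs_lt (hi : i < n) (hδ : δ < 2) : (Rsh i δ).rhs < 2*n := by
  show 2*i+δ < 2*n; omega

lemma card_sys (hn : 0 < n) (hd : 0 < d) (hk : 2 ≤ k) :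
    (sys n d k).card = 2*n + k - 1 := by
  rw [sys, Finset.card_union_of_disjoint, Finset.card_insert_of_notMem,
    Finset.card_image_of_injOn, Finset.card_image_of_injOn, Finset.card_product,
    Finset.card_range, Finset.card_range, Finset.card_range]
  · omega
  · intro a ha b hb h
    rw [Finset.mem_coe, Finset.mem_range] at ha hb
    have := congrArg Rule.K h
    simp only [Lj] at this
    have h2 : ((0 : ℕ), a+2) ∈ insert ((0:ℕ), b+2) (yPart n (d-1)) := by
      rw [← this]; exact Finset.mem_insert_self _ _
    rcases Finset.mem_insert.1 h2 with h3 | h3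
    · simpa using h3
    · exact absurd h3 (zero_not_mem_yPart hn _ _)
  · rintro ⟨i, δ⟩ hp ⟨i', δ'⟩ hq h
    simp only [Finset.mem_coe, Finset.mem_product, Finset.mem_range] at hp hq
    have := Rsh_inj hp.2 hq.2 h
    exact Prod.ext this.1 this.2
  · intro h
    obtain ⟨j, _, hj⟩ := Finset.mem_image.1 h
    exact Lj_ne_L0 hn j hj
  · rw [Finset.disjoint_left]
    rintro r hr hr'
    obtain ⟨⟨i, δ⟩, hp, rfl⟩ := Finset.mem_image.1 hr
    simp only [Finset.mem_product, Finset.mem_range] at hp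
    have hlt : (Rsh i δ).rhs < 2*n := Rsh_rhs_lt hp.1 hp.2
    rcases Finset.mem_insert.1 hr' with h | h
    · rw [h] at hlt
      simp only [L0] at hlt
      omega
    · obtain ⟨j, _, hj⟩ := Finset.mem_image.1 h
      rw [← hj] at hlt
      simp only [Lj] at hlt
      omega

lemma nPar_sys (hn : 0 < n) (hd : 0 < d) : nPar (sys n d k) = n + d := by
  rw [nPar, attrs_sys hn hd, Finset.card_range]

lemma sys_nonempty : (sys n d k).Nonempty :=
  ⟨L0 n d, mem_sys.2 (Or.inr (Or.inl rfl))⟩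

lemma reduced_sys (hn : 0 < n) (hd : 0 < d) (hk : 2 ≤ k) : Reduced (sys n d k) := by
  refine ⟨?_, ?_, ?_, ?_⟩
  · rw [attrs_sys hn hd, nPar_sys hn hd]
    exact Finset.range_subset_range.2 (by omega)
  · rw [rhsSet_sys hn, Finset.card_range]
    exact Finset.range_subset_range.2 (by omega)
  · intro i hi
    rw [attrs_sys hn hd, Finset.mem_range] at hi
    rw [kPar_sys hn hd hk]
    rcases Nat.eq_zero_or_pos i with rfl | hipos
    · rw [VS_sys_zero hn hk]
      exact Finset.range_subset_range.2 (by omega)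
    rcases Nat.lt_or_ge i n with h | h
    · rw [VS_sys_mid hipos h]
      intro x hx
      simp only [Finset.mem_insert, Finset.mem_singleton] at hx
      rw [Finset.mem_range]
      omega
    · rw [VS_sys_high hn h hi]
      intro x hx
      simp only [Finset.mem_singleton] at hx
      rw [Finset.mem_range]
      omega
  · rw [dPar_sys hn hd]
    omega

lemma rhs_unique (hn : 0 < n) {r : Rule} (hr : r ∈ sys n d k) {i b : ℕ}
    (hi : i < n) (hb : b < 2) (h : r.rhs = 2*i+b) : r = Rsh i b := by
  rcases mem_sys.1 hr with ⟨i', hi', δ, hδ, rfl⟩ | rfl | ⟨j, _, rfl⟩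
  · have h2 : 2*i'+δ = 2*i+b := h
    have : i' = i ∧ δ = b := by omega
    rw [this.1, this.2]
  · have h2 : 2*n = 2*i+b := h
    omega
  · have h2 : 2*n = 2*i+b := h
    omega

end Example5
namespace Example5

lemma termSet_subset {S : Finset Rule} {G : DGraph} (hdg : G.IsDG S false)
    {t : ℕ} (ht : t < G.n) (hterm : G.IsTerminal t) : G.termSet t ⊆ S := by
  have h := hdg.2.2.2 t ht
  rw [if_pos hterm] at h
  obtain ⟨Z, hZ, hZS⟩ := h
  rw [DGraph.termSet, hZ]
  exact hZS

lemma liftK_Rsh (i b : ℕ) : liftK (Rsh i b).K = {((i : ℕ), some b)} := by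
  simp [liftK, Rsh]

def sigA (A : Finset ℕ) : ℕ → ℕ := fun i => if i ∈ A then 1 else 0

lemma sigA_pos {A : Finset ℕ} {i : ℕ} (h : i ∈ A) : sigA A i = 1 := if_pos h
lemma sigA_neg {A : Finset ℕ} {i : ℕ} (h : i ∉ A) : sigA A i = 0 := if_neg h
lemma sigA_lt_two (A : Finset ℕ) (i : ℕ) : sigA A i < 2 := by
  rw [sigA]; split <;> omega

variable {n d k : ℕ}

lemma key_lemma (hn : 0 < n) (hd : 0 < d) (hk : 2 ≤ k) (G : DGraph)
    (hdg : G.IsDG (sys n d k) false) (hsol : G.SolvesAD (sys n d k))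
    (A : Finset ℕ) (hA : A ⊆ Finset.range n) :
    ∃ t, t < G.n ∧ G.IsTerminal t ∧ ∀ i < n,
      Rsh i (sigA A i) ∈ G.termSet t ∧ Rsh i (1 - sigA A i) ∉ G.termSet t := by
  set S := sys n d k with hS
  set σ := sigA A with hσdef
  have hσ : ∀ a ∈ attrs S, σ a ∈ VS S a := by
    intro a ha
    rw [hS, attrs_sys hn hd, Finset.mem_range] at ha
    by_cases hmem : a ∈ A
    · have han : a < n := Finset.mem_range.1 (hA hmem)
      rw [hσdef, sigA_pos hmem]
      rcases Nat.eq_zero_or_pos a with rfl | hapos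
      · rw [hS, VS_sys_zero hn hk]; exact Finset.mem_range.2 (by omega)
      · rw [hS, VS_sys_mid hapos han]; simp
    · rw [hσdef, sigA_neg hmem]
      rcases Nat.lt_or_ge a n with h | h
      · rcases Nat.eq_zero_or_pos a with rfl | hapos
        · rw [hS, VS_sys_zero hn hk]; exact Finset.mem_range.2 (by omega)
        · rw [hS, VS_sys_mid hapos h]; simp
      · rw [hS, VS_sys_high hn h ha]; simp
  obtain ⟨p, t, hcp, hq⟩ := exists_walk S G hdg σ hσ
  obtain ⟨hchain, hterm, htn⟩ := hcp
  have hcons : ConsistentE (G.pathEqs p) := by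
    intro q1 h1 q2 h2 hfst
    obtain ⟨a1, rfl⟩ := hq q1 h1
    obtain ⟨a2, rfl⟩ := hq q2 h2
    simp only at hfst
    rw [hfst]
  obtain ⟨hsol1, hsol2⟩ := hsol p t ⟨hchain, hterm, htn⟩ hcons
  have hsub := termSet_subset hdg htn hterm
  refine ⟨t, htn, hterm, ?_⟩
  intro i hi
  have hb2 : σ i < 2 := sigA_lt_two A i
  have hRb : Rsh i (σ i) ∈ S := mem_sys.2 (Or.inl ⟨i, hi, σ i, hb2, rfl⟩)
  have hrhs_not : Rsh i (σ i) ∉ G.termSet t →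
      (Rsh i (σ i)).rhs ∉ (G.termSet t).image Rule.rhs := by
    intro hnotin hmem
    obtain ⟨r', hr', hr'rhs⟩ := Finset.mem_image.1 hmem
    have : r' = Rsh i (σ i) := rhs_unique hn (hsub hr') hi hb2 hr'rhs
    rw [this] at hr'
    exact hnotin hr'
  have hstep_a : ((i : ℕ), some (σ i)) ∈ G.pathEqs p := by
    by_contra hni
    have hnoi : ∀ x, ((i : ℕ), x) ∉ G.pathEqs p := by
      intro x hx
      obtain ⟨a, ha⟩ := hq _ hx
      have h1 : i = a := congrArg Prod.fst ha
      have h2 : x = some (σ a) := congrArg Prod.snd ha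
      apply hni
      rw [h2, ← h1] at hx
      exact hx
    have hconsU : ConsistentE (liftK (Rsh i (σ i)).K ∪ G.pathEqs p) := by
      intro q1 h1 q2 h2 hfst
      rw [Finset.mem_union, liftK_Rsh, Finset.mem_singleton] at h1 h2
      rcases h1 with rfl | h1 <;> rcases h2 with rfl | h2
      · rfl
      · exfalso
        have : ((i : ℕ), q2.2) = q2 := Prod.ext hfst rfl
        rw [← this] at h2
        exact hnoi _ h2
      · exfalso
        have : ((i : ℕ), q1.2) = q1 := Prod.ext hfst.symm rfl
        rw [← this] at h1
        exact hnoi _ h1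
      · exact hcons _ h1 _ h2 hfst
    have hnotin : Rsh i (σ i) ∉ G.termSet t := by
      intro hin
      apply hni
      apply hsol1 _ hin
      rw [liftK_Rsh]
      exact Finset.mem_singleton_self _
    exact (hsol2 _ hRb hnotin (hrhs_not hnotin)) hconsU
  constructor
  · by_contra hnotin
    apply hsol2 _ hRb hnotin (hrhs_not hnotin)
    have hsubU : liftK (Rsh i (σ i)).K ∪ G.pathEqs p = G.pathEqs p := by
      rw [liftK_Rsh]
      rw [Finset.union_eq_right]
      intro x hx
      rw [Finset.mem_singleton] at hx
      rw [hx]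
      exact hstep_a
    rw [hsubU]
    exact hcons
  · intro hin
    have hmem : ((i : ℕ), some (1 - σ i)) ∈ G.pathEqs p := by
      apply hsol1 _ hin
      rw [liftK_Rsh]
      exact Finset.mem_singleton_self _
    obtain ⟨a, ha⟩ := hq _ hmem
    have h1 : i = a := congrArg Prod.fst ha
    have h2 : some (1 - σ i) = some (σ a) := congrArg Prod.snd ha
    rw [← h1] at h2
    have h3 := Option.some.inj h2
    have := sigA_lt_two A i
    omega

lemma tCount_lower (hn : 0 < n) (hd : 0 < d) (hk : 2 ≤ k) (G : DGraph)
    (hdg : G.IsDG (sys n d k) false) (hsol : G.SolvesAD (sys n d k)) :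
    2 ^ n ≤ G.tCount := by
  have key : ∀ A : Finset ℕ, ∃ t, A ∈ (Finset.range n).powerset →
      t < G.n ∧ G.IsTerminal t ∧ ∀ i < n,
        Rsh i (sigA A i) ∈ G.termSet t ∧ Rsh i (1 - sigA A i) ∉ G.termSet t := by
    intro A
    by_cases hA : A ∈ (Finset.range n).powerset
    · obtain ⟨t, h1, h2, h3⟩ :=
        key_lemma hn hd hk G hdg hsol A (Finset.mem_powerset.1 hA)
      exact ⟨t, fun _ => ⟨h1, h2, h3⟩⟩
    · exact ⟨0, fun h => absurd h hA⟩
  choose tfun htfun using key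
  have hcard : (Finset.range n).powerset.card ≤ G.tCount := by
    apply Finset.card_le_card_of_injOn (fun A => G.termSet (tfun A))
    · intro A hA
      apply Finset.mem_image.2
      exact ⟨tfun A, Finset.mem_filter.2 ⟨Finset.mem_range.2 (htfun A hA).1,
        (htfun A hA).2.1⟩, rfl⟩
    · intro A hA A' hA' hEq
      rw [Finset.mem_coe] at hA hA'
      dsimp only at hEq
      obtain ⟨_, _, h3⟩ := htfun A hA
      obtain ⟨_, _, h3'⟩ := htfun A' hA'
      have hAsub := Finset.mem_powerset.1 hA
      have hA'sub := Finset.mem_powerset.1 hA'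
      ext i
      by_cases hi : i < n
      · constructor
        · intro hiA
          by_contra hiA'
          have p1 := (h3 i hi).1
          rw [sigA_pos hiA] at p1
          have p2 := (h3' i hi).2
          rw [sigA_neg hiA'] at p2
          norm_num at p2
          rw [hEq] at p1
          exact p2 p1
        · intro hiA'
          by_contra hiA
          have p1 := (h3' i hi).1
          rw [sigA_pos hiA'] at p1
          have p2 := (h3 i hi).2
          rw [sigA_neg hiA] at p2
          norm_num at p2
          rw [← hEq] at p1
          exact p2 p1
      · constructor
        · intro h; exact absurd (Finset.mem_range.1 (hAsub h)) hi
        · intro h; exact absurd (Finset.mem_range.1 (hA'sub h)) hi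
  rw [Finset.card_powerset, Finset.card_range] at hcard
  exact hcard

end Example5
/-- Lemma 11(b): for positive n, d, k with k ≥ 2 there is a reduced system S with
n(S) = n + d, k(S) = k, d(S) = d, |S| = 2n + k − 1 and T_AD(S) ≥ 2^n. -/
theorem statement_5 (n d k : ℕ) (hn : 0 < n) (hd : 0 < d) (hk : 2 ≤ k) :
    ∃ S : Finset Rule, S.Nonempty ∧ (∀ r ∈ S, r.WF) ∧ Reduced S ∧
      nPar S = n + d ∧ kPar S = k ∧ dPar S = d ∧ S.card = 2 * n + k - 1 ∧
      2 ^ n ≤ T_AD S := by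
  refine ⟨Example5.sys n d k, Example5.sys_nonempty, Example5.sys_WF hn,
    Example5.reduced_sys hn hd hk, Example5.nPar_sys hn hd, Example5.kPar_sys hn hd hk,
    Example5.dPar_sys hn hd, Example5.card_sys hn hd hk, ?_⟩
  have hne : {m | ∃ G : DGraph, TreeSolvesAD (Example5.sys n d k) G ∧ G.tCount = m}.Nonempty := by
    obtain ⟨G, hG⟩ := FullTree.exists_tree_solvesAD (Example5.sys n d k) (n + d)
      (by omega) (Example5.attrs_sys hn hd)
    exact ⟨G.tCount, G, hG, rfl⟩
  have hmem := Nat.sInf_mem hne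
  obtain ⟨G, ⟨hdg, _, hsol⟩, heq⟩ := hmem
  rw [T_AD, ← heq]
  exact Example5.tCount_lower hn hd hk G hdg hsol

end DRS

end
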